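/- For the Kronecker n-quiver with both vertex dimensions nonzero, the moment map Φ : 𝒜 → Lie(K)* is proper. -/

import Mathlib

open Matrix

/-- The moment map for the Kronecker `n`-quiver with both vertex dimensions nonzero,
`Φ(ρ) = √-1 (λ_a·id − Σⱼ ρⱼ*ρⱼ, λ_b·id + Σⱼ ρⱼρⱼ*)`, is proper: the preimage of any
compact set is compact. -/
theorem kronecker_moment_map_proper (n da db : ℕ) (hda : 1 ≤ da) (hdb : 1 ≤ db)
    (la lb : ℝ)
    (Φ : (Fin n → Matrix (Fin db) (Fin da) ℂ) →
      Matrix (Fin da) (Fin da) ℂ × Matrix (Fin db) (Fin db) ℂ)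
    (hΦ : ∀ ρ, Φ ρ =
      (Complex.I • ((la : ℂ) • (1 : Matrix (Fin da) (Fin da) ℂ) - ∑ j, (ρ j)ᴴ * ρ j),
       Complex.I • ((lb : ℂ) • (1 : Matrix (Fin db) (Fin db) ℂ) + ∑ j, ρ j * (ρ j)ᴴ))) :
    ∀ K : Set (Matrix (Fin da) (Fin da) ℂ × Matrix (Fin db) (Fin db) ℂ),
      IsCompact K → IsCompact (Φ ⁻¹' K) := by
  intro K hK
  -- Φ is continuous
  have hcont : Continuous Φ := by
    have : Continuous fun ρ : Fin n → Matrix (Fin db) (Fin da) ℂ =>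
      (Complex.I • ((la : ℂ) • (1 : Matrix (Fin da) (Fin da) ℂ) - ∑ j, (ρ j)ᴴ * ρ j),
       Complex.I • ((lb : ℂ) • (1 : Matrix (Fin db) (Fin db) ℂ) + ∑ j, ρ j * (ρ j)ᴴ)) := by
      apply Continuous.prodMk
      · refine (continuous_const_smul Complex.I).comp' ?_
        exact (continuous_const.sub (continuous_finset_sum _ fun j _ =>
          ((continuous_apply j).matrix_conjTranspose.matrix_mul
            (continuous_apply j))))
      · refine (continuous_const_smul Complex.I).comp' ?_
        exact (continuous_const.add (continuous_finset_sum _ fun j _ =>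
          ((continuous_apply j).matrix_mul
            (continuous_apply j).matrix_conjTranspose)))
    have heq : Φ = fun ρ =>
      (Complex.I • ((la : ℂ) • (1 : Matrix (Fin da) (Fin da) ℂ) - ∑ j, (ρ j)ᴴ * ρ j),
       Complex.I • ((lb : ℂ) • (1 : Matrix (Fin db) (Fin db) ℂ) + ∑ j, ρ j * (ρ j)ᴴ)) :=
      funext hΦ
    rw [heq]; exact this
  -- bound on the trace of the first component over K
  have htr : Continuous fun P : Matrix (Fin da) (Fin da) ℂ × Matrix (Fin db) (Fin db) ℂ =>
      ‖P.1.trace‖ := by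
    exact (continuous_norm.comp (continuous_fst.matrix_trace))
  obtain ⟨C, hC⟩ : ∃ C : ℝ, ∀ P ∈ K, ‖P.1.trace‖ ≤ C := by
    obtain ⟨C, hC⟩ := (hK.image htr).bddAbove
    exact ⟨C, fun P hP => hC (Set.mem_image_of_mem _ hP)⟩
  set R : ℝ := Real.sqrt (C + |la * da|) with hR
  -- the preimage is contained in a compact box
  have hsub : Φ ⁻¹' K ⊆ Set.univ.pi fun _ : Fin n =>
      Set.univ.pi fun _ : Fin db => Set.univ.pi fun _ : Fin da =>
        Metric.closedBall (0 : ℂ) R := by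
    intro ρ hρ
    -- compute the trace of the first component
    set t : ℝ := ∑ j, ∑ k, ∑ i, Complex.normSq (ρ j i k) with ht
    have htnonneg : 0 ≤ t :=
      Finset.sum_nonneg fun j _ => Finset.sum_nonneg fun k _ =>
        Finset.sum_nonneg fun i _ => Complex.normSq_nonneg _
    have htrace : (Φ ρ).1.trace = Complex.I * ((la * da : ℝ) - (t : ℝ)) := by
      rw [hΦ]
      simp only [Matrix.trace_smul, Matrix.trace_sub, Matrix.trace_smul, Matrix.trace_one,
        Matrix.trace_sum, smul_eq_mul]
      congr 1
      have h1 : ∀ j : Fin n, Matrix.trace ((ρ j)ᴴ * ρ j)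
          = ((∑ k, ∑ i, Complex.normSq (ρ j i k) : ℝ) : ℂ) := by
        intro j
        simp only [Matrix.trace, Matrix.diag, Matrix.mul_apply, Matrix.conjTranspose_apply]
        push_cast
        refine Finset.sum_congr rfl fun k _ => Finset.sum_congr rfl fun i _ => ?_
        rw [Complex.normSq_eq_conj_mul_self, Complex.star_def]
      rw [Finset.sum_congr rfl fun j _ => h1 j, ht]
      push_cast [Fintype.card_fin]
      ring
    have habs : ‖(Φ ρ).1.trace‖ = |la * da - t| := by
      rw [htrace,
        show ((la * (da : ℕ) : ℝ) : ℂ) - (t : ℂ) = ((la * da - t : ℝ) : ℂ) by push_cast; ring,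
        norm_mul, Complex.norm_I, one_mul, Complex.norm_real, Real.norm_eq_abs]
    have hb : ‖(Φ ρ).1.trace‖ ≤ C := hC _ hρ
    have htb : t ≤ C + |la * da| := by
      have h1 : t - la * da ≤ |la * da - t| := by
        rw [abs_sub_comm]; exact le_abs_self _
      have h2 : la * da ≤ |la * da| := le_abs_self _
      nlinarith [habs ▸ hb]
    intro j _
    intro i _
    intro k _
    simp only [Metric.mem_closedBall, dist_zero_right]
    have hsq : Complex.normSq (ρ j i k) ≤ t := by
      calc Complex.normSq (ρ j i k) ≤ ∑ i', Complex.normSq (ρ j i' k) :=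
            Finset.single_le_sum (f := fun i' => Complex.normSq (ρ j i' k)) (fun i' _ => Complex.normSq_nonneg _) (Finset.mem_univ i)
        _ ≤ ∑ k', ∑ i', Complex.normSq (ρ j i' k') :=
            Finset.single_le_sum (f := fun k' => ∑ i', Complex.normSq (ρ j i' k'))
              (fun k' _ => Finset.sum_nonneg fun i' _ =>
              Complex.normSq_nonneg _) (Finset.mem_univ k)
        _ ≤ t :=
            Finset.single_le_sum (f := fun j' => ∑ k', ∑ i', Complex.normSq (ρ j' i' k'))
              (fun j' _ => Finset.sum_nonneg fun k' _ => Finset.sum_nonneg fun i' _ =>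
                Complex.normSq_nonneg _) (Finset.mem_univ j)
    have : ‖ρ j i k‖ ^ 2 ≤ C + |la * da| := by
      rw [Complex.sq_norm]
      exact hsq.trans htb
    calc ‖ρ j i k‖ = Real.sqrt (‖ρ j i k‖ ^ 2) := by
          rw [Real.sqrt_sq (norm_nonneg _)]
      _ ≤ R := Real.sqrt_le_sqrt this
  have hbox : IsCompact (Set.univ.pi fun _ : Fin n =>
      Set.univ.pi fun _ : Fin db => Set.univ.pi fun _ : Fin da =>
        Metric.closedBall (0 : ℂ) R) :=
    isCompact_univ_pi fun _ => isCompact_univ_pi fun _ => isCompact_univ_pi fun _ =>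
      isCompact_closedBall _ _
  exact hbox.of_isClosed_subset (hK.isClosed.preimage hcont) hsub
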